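/- (Motzkin's Transposition Theorem, simplified form) Let A ∈ ℝ^{m×n}, B ∈ ℝ^{k×n}, b ∈ ℝ^m, c ∈ ℝ^k, and assume {x | A x ≤ b} ≠ ∅. Then {x | A x ≤ b} ∩ {x | B x < c} = ∅ if and only if there exist y ∈ ℝ^m and z ∈ ℝ^k with y ≥ 0, z ≥ 0, 1ᵀz > 0, Aᵀy + Bᵀz = 0, and bᵀy + cᵀz ≤ 0. -/

import Mathlib

open Finset

variable {E : Type*} [AddCommGroup E] [Module ℝ E]
variable {ι : Type*} [Fintype ι] [DecidableEq ι]

lemma cone_carath (v : ι → E) (s : Finset ι) :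
    ∀ (y : ι → ℝ), (∀ i, 0 ≤ y i) → (∀ i ∉ s, y i = 0) →
    ∃ (t : Finset ι) (z : ι → ℝ), (∀ i, 0 ≤ z i) ∧ (∀ i ∉ t, z i = 0) ∧
      ∑ i, z i • v i = ∑ i, y i • v i ∧
      LinearIndependent ℝ (fun i : t => v (i : ι)) := by
  induction s using Finset.strongInductionOn with
  | _ s ih =>
    intro y hy hsupp
    by_cases hli : LinearIndependent ℝ (fun i : s => v (i : ι))
    · exact ⟨s, y, hy, hsupp, rfl, hli⟩
    · obtain ⟨g, hg0, hgex⟩ : ∃ g : s → ℝ, ∑ i, g i • v (i : ι) = 0 ∧ ∃ i, 0 < g i := by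
        obtain ⟨g, hg0, i₁, hi₁⟩ := Fintype.not_linearIndependent_iff.mp hli
        rcases hi₁.lt_or_gt with h | h
        · exact ⟨-g, by simpa using hg0, i₁, by simpa using h⟩
        · exact ⟨g, hg0, i₁, h⟩
      set T : Finset s := Finset.univ.filter (fun i => 0 < g i) with hT
      have hTne : T.Nonempty := by
        obtain ⟨i, hi⟩ := hgex
        exact ⟨i, by simp [hT, hi]⟩
      obtain ⟨i₀, hi₀T, hmin⟩ := T.exists_min_image (fun i => y (i : ι) / g i) hTne
      have hgi₀ : 0 < g i₀ := by simpa [hT] using hi₀T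
      set τ : ℝ := y (i₀ : ι) / g i₀ with hτ
      have hτ0 : 0 ≤ τ := div_nonneg (hy _) hgi₀.le
      set z : ι → ℝ := fun i => if h : i ∈ s then y i - τ * g ⟨i, h⟩ else 0 with hz
      have hz0 : ∀ i, 0 ≤ z i := by
        intro i
        rw [hz]
        by_cases h : i ∈ s
        · simp only [dif_pos h]
          by_cases hg : 0 < g ⟨i, h⟩
          · have h1 : τ ≤ y i / g ⟨i, h⟩ := hmin ⟨i, h⟩ (by simp [hT, hg])
            have h2 : τ * g ⟨i, h⟩ ≤ (y i / g ⟨i, h⟩) * g ⟨i, h⟩ :=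
              mul_le_mul_of_nonneg_right h1 hg.le
            rw [div_mul_cancel₀ _ hg.ne'] at h2
            linarith
          · push_neg at hg
            have : τ * g ⟨i, h⟩ ≤ 0 := mul_nonpos_of_nonneg_of_nonpos hτ0 hg
            have := hy i
            linarith
        · simp [dif_neg h]
      have hzsupp : ∀ i ∉ s.erase (i₀ : ι), z i = 0 := by
        intro i hi
        rw [Finset.mem_erase] at hi
        push_neg at hi
        by_cases h : i ∈ s
        · have hii : i = (i₀ : ι) := by
            by_contra hne
            exact (hi hne) h
          rw [hz]
          simp only [dif_pos h]
          have hsub : (⟨i, h⟩ : s) = i₀ := Subtype.ext hii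
          rw [hsub, hii, hτ, div_mul_cancel₀ _ hgi₀.ne']
          ring
        · rw [hz]; simp [dif_neg h]
      have hsum : ∑ i, z i • v i = ∑ i, y i • v i := by
        have e1 : ∑ i, z i • v i = ∑ i ∈ s, z i • v i := by
          refine (Finset.sum_subset (Finset.subset_univ s) ?_).symm
          intro i _ hi
          rw [hz]; simp [dif_neg hi]
        have e2 : ∑ i, y i • v i = ∑ i ∈ s, y i • v i := by
          refine (Finset.sum_subset (Finset.subset_univ s) ?_).symm
          intro i _ hi
          rw [hsupp i hi, zero_smul]
        rw [e1, e2, ← Finset.sum_attach s (fun i => z i • v i)]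
        have hcg : ∀ i ∈ s.attach, z (i : ι) • v (i : ι)
            = y (i : ι) • v (i : ι) - τ • (g i • v (i : ι)) := by
          intro i _
          rw [hz]
          simp only [dif_pos i.2]
          rw [smul_smul, sub_smul]
        rw [Finset.sum_congr rfl hcg, Finset.sum_sub_distrib,
          Finset.sum_attach s (fun i => y i • v i), ← Finset.smul_sum,
          ← Finset.univ_eq_attach, hg0, smul_zero, sub_zero]
      have hss : s.erase (i₀ : ι) ⊂ s := Finset.erase_ssubset i₀.2
      obtain ⟨t, z', h1, h2, h3, h4⟩ := ih _ hss z hz0 hzsupp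
      exact ⟨t, z', h1, h2, h3.trans hsum, h4⟩

section Closed

variable {F : Type*} [NormedAddCommGroup F] [NormedSpace ℝ F] [FiniteDimensional ℝ F]

lemma cone_isClosed (v : ι → F) :
    IsClosed {x : F | ∃ y : ι → ℝ, (∀ i, 0 ≤ y i) ∧ x = ∑ i, y i • v i} := by
  classical
  have key : {x : F | ∃ y : ι → ℝ, (∀ i, 0 ≤ y i) ∧ x = ∑ i, y i • v i} =
      ⋃ t : {t : Finset ι // LinearIndependent ℝ (fun i : t => v (i : ι))},
        (fun y : ((t : Finset ι) : Type _) → ℝ => ∑ i, y i • v (i : ι)) ''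
          {y | ∀ i, 0 ≤ y i} := by
    ext x
    constructor
    · rintro ⟨y, hy, rfl⟩
      obtain ⟨t, z, h1, h2, h3, h4⟩ := cone_carath v Finset.univ y hy (by simp)
      refine Set.mem_iUnion.mpr ⟨⟨t, h4⟩, ⟨fun i => z (i : ι), fun i => h1 _, ?_⟩⟩
      rw [← h3]
      show (∑ i : t, z (i : ι) • v (i : ι)) = ∑ i : ι, z i • v i
      have : ∑ i : t, z (i : ι) • v (i : ι) = ∑ i ∈ t, z i • v i := by
        rw [Finset.univ_eq_attach, Finset.sum_attach t (fun i => z i • v i)]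
      rw [this]
      exact Finset.sum_subset (Finset.subset_univ t)
        (fun i _ hi => by rw [h2 i hi, zero_smul])
    · intro hx
      obtain ⟨⟨t, ht⟩, y, hy, rfl⟩ := Set.mem_iUnion.mp hx
      refine ⟨fun i => if h : i ∈ t then y ⟨i, h⟩ else 0, ?_, ?_⟩
      · intro i
        by_cases h : i ∈ t
        · simpa [dif_pos h] using hy ⟨i, h⟩
        · simp [dif_neg h]
      · rw [show (∑ i, (if h : i ∈ t then y ⟨i, h⟩ else 0) • v i)
            = ∑ i ∈ t, (if h : i ∈ t then y ⟨i, h⟩ else 0) • v i from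
          (Finset.sum_subset (Finset.subset_univ t)
            (fun i _ hi => by simp [dif_neg hi])).symm]
        rw [← Finset.sum_attach t
          (fun i => (if h : i ∈ t then y ⟨i, h⟩ else 0) • v i), Finset.univ_eq_attach]
        exact Finset.sum_congr rfl (fun i _ => by simp [dif_pos i.2])
  rw [key]
  apply isClosed_iUnion_of_finite
  rintro ⟨t, ht⟩
  have hfun : (fun y : ((t : Finset ι) : Type _) → ℝ => ∑ i, y i • v (i : ι)) =
      ⇑(LinearMap.lsum ℝ (fun _ : t => ℝ) ℕ fun i => LinearMap.id.smulRight (v (i : ι))) := by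
    funext y
    simp [LinearMap.lsum_apply]
  have hker := Fintype.linearIndependent_iff'.mp ht
  have hcl : IsClosed {y : ((t : Finset ι) : Type _) → ℝ | ∀ i, 0 ≤ y i} := by
    have : {y : ((t : Finset ι) : Type _) → ℝ | ∀ i, 0 ≤ y i} = ⋂ i, {y | 0 ≤ y i} := by
      ext y; simp [Set.mem_iInter]
    rw [this]
    exact isClosed_iInter fun i => isClosed_le continuous_const (continuous_apply i)
  rw [hfun]
  exact (LinearMap.isClosedEmbedding_of_injective hker).isClosedMap _ hcl

end Closed

section Sep

open scoped InnerProductSpace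

variable {H : Type*} [NormedAddCommGroup H] [InnerProductSpace ℝ H] [FiniteDimensional ℝ H]

lemma cone_mem_or_sep (v : ι → H) (u : H) :
    (∃ y : ι → ℝ, (∀ i, 0 ≤ y i) ∧ u = ∑ i, y i • v i) ∨
      (∃ w : H, (∀ i, 0 ≤ ⟪v i, w⟫_ℝ) ∧ ⟪w, u⟫_ℝ < 0) := by
  classical
  by_cases hu : ∃ y : ι → ℝ, (∀ i, 0 ≤ y i) ∧ u = ∑ i, y i • v i
  · exact Or.inl hu
  · right
    let K : ConvexCone ℝ H :=
      { carrier := {x : H | ∃ y : ι → ℝ, (∀ i, 0 ≤ y i) ∧ x = ∑ i, y i • v i}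
        smul_mem' := by
          rintro c hc x ⟨y, hy, rfl⟩
          exact ⟨fun i => c * y i, fun i => mul_nonneg hc.le (hy i), by
            rw [Finset.smul_sum]
            exact Finset.sum_congr rfl fun i _ => by rw [smul_smul]⟩
        add_mem' := by
          rintro x ⟨y₁, hy₁, rfl⟩ x' ⟨y₂, hy₂, rfl⟩
          exact ⟨fun i => y₁ i + y₂ i, fun i => add_nonneg (hy₁ i) (hy₂ i), by
            rw [← Finset.sum_add_distrib]
            exact Finset.sum_congr rfl fun i _ => by rw [add_smul]⟩ }
    have hne : ((K : Set H)).Nonempty :=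
      ⟨0, ⟨fun _ => 0, fun i => le_refl 0, by simp⟩⟩
    have hcl : IsClosed (K : Set H) := cone_isClosed v
    let C : ProperCone ℝ H :=
      { carrier := (K : Set H)
        add_mem' := fun ha hb => K.add_mem ha hb
        zero_mem' := ⟨fun _ => 0, fun i => le_refl 0, by simp⟩
        smul_mem' := by
          rintro c x ⟨y, hy, rfl⟩
          exact ⟨fun i => c * y i, fun i => mul_nonneg c.2 (hy i), by
            rw [Finset.smul_sum]
            exact Finset.sum_congr rfl fun i _ => (NNReal.smul_def c _).trans (smul_smul _ _ _)⟩
        isClosed' := hcl }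
    obtain ⟨w, hw1, hw2⟩ := C.hyperplane_separation' (x₀ := u) hu
    refine ⟨w, fun i => ?_, by rw [real_inner_comm]; exact hw2⟩
    apply hw1
    refine ⟨fun j => if j = i then 1 else 0, fun j => by positivity, ?_⟩
    simp [ite_smul]

end Sep

open Matrix

section Main

open scoped InnerProductSpace

/-- Motzkin's Transposition Theorem (simplified form). -/
theorem stmt7 {m k n : ℕ} (A : Matrix (Fin m) (Fin n) ℝ) (B : Matrix (Fin k) (Fin n) ℝ)
    (b : Fin m → ℝ) (c : Fin k → ℝ)
    (hne : ∃ x : Fin n → ℝ, A.mulVec x ≤ b) :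
    ({x : Fin n → ℝ | A.mulVec x ≤ b} ∩ {x : Fin n → ℝ | ∀ i, B.mulVec x i < c i} = ∅) ↔
      ∃ (y : Fin m → ℝ) (z : Fin k → ℝ), 0 ≤ y ∧ 0 ≤ z ∧ 0 < ∑ i, z i ∧
        Aᵀ.mulVec y + Bᵀ.mulVec z = 0 ∧ b ⬝ᵥ y + c ⬝ᵥ z ≤ 0 := by
  classical
  set f : (Fin m ⊕ (Fin k ⊕ Unit)) → ((Fin n ⊕ Fin 2) → ℝ) :=
    Sum.elim (fun i => Sum.elim (fun l => A i l) ![0, b i])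
      (Sum.elim (fun j => Sum.elim (fun l => B j l) ![1, c j])
        (fun _ => Sum.elim (fun _ => 0) ![0, 1])) with hf
  set fu : (Fin n ⊕ Fin 2) → ℝ := Sum.elim (fun _ => (0:ℝ)) ![1, 0] with hfu
  set v : (Fin m ⊕ (Fin k ⊕ Unit)) → EuclideanSpace ℝ (Fin n ⊕ Fin 2) :=
    fun i => (WithLp.equiv 2 _).symm (f i) with hv
  set u : EuclideanSpace ℝ (Fin n ⊕ Fin 2) := (WithLp.equiv 2 _).symm fu with hu
  constructor
  · intro hempty
    have hemp := Set.eq_empty_iff_forall_notMem.mp hempty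
    rcases cone_mem_or_sep v u with ⟨y', hy', hmem⟩ | ⟨w, hw1, hw2⟩
    · -- membership case: extract the certificate
      have hcoord : ∀ j : Fin n ⊕ Fin 2, fu j = ∑ i, y' i * f i j := by
        intro j
        have h2 := congrArg (WithLp.linearEquiv 2 ℝ ((Fin n ⊕ Fin 2) → ℝ)) hmem
        rw [map_sum] at h2
        simp only [_root_.map_smul, WithLp.linearEquiv_apply, hu, hv,
          WithLp.equiv_symm_apply, WithLp.ofLp_toLp] at h2
        have h3 := congrFun h2 j
        simpa [Finset.sum_apply, Equiv.apply_symm_apply] using h3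
      refine ⟨fun i => y' (Sum.inl i), fun j => y' (Sum.inr (Sum.inl j)),
        fun i => hy' _, fun j => hy' _, ?_, ?_, ?_⟩
      · have h := hcoord (Sum.inr 0)
        simp only [hfu, hf, Fintype.sum_sum_type, Fintype.sum_unique,
          Sum.elim_inl, Sum.elim_inr] at h
        simp only [Matrix.cons_val_zero, mul_zero, mul_one, Finset.sum_const_zero,
          zero_add, add_zero] at h
        rw [← h]; norm_num
      · funext l
        have h := hcoord (Sum.inl l)
        simp only [hfu, hf, Fintype.sum_sum_type, Fintype.sum_unique,
          Sum.elim_inl, Sum.elim_inr, mul_zero, Finset.sum_const_zero, add_zero] at h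
        simp only [Pi.add_apply, Matrix.mulVec, dotProduct,
          Matrix.transpose_apply, Pi.zero_apply]
        have e1 : ∑ x : Fin m, A x l * y' (Sum.inl x)
            = ∑ x : Fin m, y' (Sum.inl x) * A x l :=
          Finset.sum_congr rfl fun i _ => mul_comm _ _
        have e2 : ∑ x : Fin k, B x l * y' (Sum.inr (Sum.inl x))
            = ∑ x : Fin k, y' (Sum.inr (Sum.inl x)) * B x l :=
          Finset.sum_congr rfl fun i _ => mul_comm _ _
        rw [e1, e2]
        linarith [h]
      · have h := hcoord (Sum.inr 1)
        simp only [hfu, hf, Fintype.sum_sum_type, Fintype.sum_unique,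
          Sum.elim_inl, Sum.elim_inr] at h
        simp only [Matrix.cons_val_one, Matrix.head_cons, Matrix.cons_val_zero,
          mul_one, Finset.sum_const_zero] at h
        have hlam : 0 ≤ y' (Sum.inr (Sum.inr ())) := hy' _
        simp only [dotProduct]
        have e1 : ∑ x : Fin m, b x * y' (Sum.inl x)
            = ∑ x : Fin m, y' (Sum.inl x) * b x :=
          Finset.sum_congr rfl fun i _ => mul_comm _ _
        have e2 : ∑ x : Fin k, c x * y' (Sum.inr (Sum.inl x))
            = ∑ x : Fin k, y' (Sum.inr (Sum.inl x)) * c x :=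
          Finset.sum_congr rfl fun i _ => mul_comm _ _
        rw [e1, e2]
        linarith [h]
    · -- separation case: build a point in the intersection, contradiction
      exfalso
      set xi : (Fin n ⊕ Fin 2) → ℝ := WithLp.equiv 2 _ w with hxi
      have hwx : w = (WithLp.equiv 2 _).symm xi := (Equiv.symm_apply_apply _ _).symm
      have hinner : ∀ i, ⟪v i, w⟫_ℝ = ∑ j, f i j * xi j := by
        intro i
        rw [hwx, hv]
        simp [PiLp.inner_apply, RCLike.inner_apply, WithLp.equiv_symm_apply, PiLp.toLp_apply, mul_comm]
      have hs : xi (Sum.inr 0) < 0 := by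
        have h2 := hw2
        rw [hwx, hu] at h2
        simpa [PiLp.inner_apply, RCLike.inner_apply, WithLp.equiv_symm_apply, PiLp.toLp_apply, hfu,
          Fintype.sum_sum_type, Fin.sum_univ_two] using h2
      set x' : Fin n → ℝ := fun l => xi (Sum.inl l) with hx'
      set t : ℝ := xi (Sum.inr 1) with htdef
      have hA : ∀ i, 0 ≤ A.mulVec x' i + b i * t := by
        intro i
        have h := hw1 (Sum.inl i)
        rw [hinner] at h
        simpa [hf, Fintype.sum_sum_type, Fin.sum_univ_two, Matrix.mulVec,
          dotProduct] using h
      have hB : ∀ j, 0 ≤ B.mulVec x' j + (xi (Sum.inr 0) + c j * t) := by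
        intro j
        have h := hw1 (Sum.inr (Sum.inl j))
        rw [hinner] at h
        simpa [hf, Fintype.sum_sum_type, Fin.sum_univ_two, Matrix.mulVec,
          dotProduct, add_assoc] using h
      have ht : 0 ≤ t := by
        have h := hw1 (Sum.inr (Sum.inr ()))
        rw [hinner] at h
        simpa [hf, Fintype.sum_sum_type, Fin.sum_univ_two] using h
      rcases ht.eq_or_lt with hteq | htpos
      · -- t = 0 : translate a feasible point far along -x'
        obtain ⟨x₀, hx₀⟩ := hne
        have hA' : ∀ i, 0 ≤ A.mulVec x' i := by
          intro i; have := hA i; rw [← hteq] at this; simpa using this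
        have hB' : ∀ j, 0 ≤ B.mulVec x' j + xi (Sum.inr 0) := by
          intro j; have := hB j; rw [← hteq] at this; simpa using this
        set μ : ℝ := 1 + ∑ j, max 0 ((B.mulVec x₀ j - c j) / (-xi (Sum.inr 0))) with hμ
        have hμ0 : 0 ≤ μ := by positivity
        refine hemp (x₀ - μ • x') ⟨?_, ?_⟩
        · intro i
          rw [Matrix.mulVec_sub, Matrix.mulVec_smul]
          simp only [Pi.sub_apply, Pi.smul_apply, smul_eq_mul]
          have h1 := hx₀ i
          have h2 := mul_nonneg hμ0 (hA' i)
          simp only at h1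
          linarith
        · intro j
          rw [Matrix.mulVec_sub, Matrix.mulVec_smul]
          simp only [Pi.sub_apply, Pi.smul_apply, smul_eq_mul]
          have hkey : (B.mulVec x₀ j - c j) / (-xi (Sum.inr 0)) < μ := by
            have hterm : (B.mulVec x₀ j - c j) / (-xi (Sum.inr 0))
                ≤ ∑ j', max 0 ((B.mulVec x₀ j' - c j') / (-xi (Sum.inr 0))) := by
              refine le_trans (le_max_right 0 _) ?_
              exact Finset.single_le_sum
                (f := fun j' => max 0 ((B.mulVec x₀ j' - c j') / (-xi (Sum.inr 0))))
                (fun j' _ => le_max_left _ _) (Finset.mem_univ j)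
            rw [hμ]; linarith
          have hspos : 0 < -xi (Sum.inr 0) := by linarith
          have hkey2 : B.mulVec x₀ j - c j < μ * (-xi (Sum.inr 0)) :=
            (div_lt_iff₀ hspos).mp hkey
          have h3 : μ * (-xi (Sum.inr 0)) ≤ μ * B.mulVec x' j :=
            mul_le_mul_of_nonneg_left (by linarith [hB' j]) hμ0
          linarith
      · -- t > 0 : x = -(1/t) • x' is in the intersection
        have h1t : t * (1/t) = 1 := mul_one_div_cancel htpos.ne'
        have h2t : 0 < 1/t := by positivity
        refine hemp ((-(1/t)) • x') ⟨?_, ?_⟩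
        · intro i
          rw [Matrix.mulVec_smul]
          simp only [Pi.smul_apply, smul_eq_mul]
          have hq := mul_nonneg h2t.le (hA i)
          have hexp : 1/t * ((A *ᵥ x') i + b i * t) = 1/t * (A *ᵥ x') i + b i := by
            field_simp
          rw [hexp] at hq
          linarith
        · intro j
          rw [Matrix.mulVec_smul]
          simp only [Pi.smul_apply, smul_eq_mul]
          have hq := mul_nonneg h2t.le (hB j)
          have hexp : 1/t * ((B *ᵥ x') j + (xi (Sum.inr 0) + c j * t))
              = 1/t * (B *ᵥ x') j + xi (Sum.inr 0) / t + c j := by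
            field_simp
            ring
          rw [hexp] at hq
          have hst : xi (Sum.inr 0) / t < 0 := div_neg_of_neg_of_pos hs htpos
          linarith
  · rintro ⟨y, z, hy, hz, hzsum, hzero, hle⟩
    rw [Set.eq_empty_iff_forall_notMem]
    rintro x ⟨hxA, hxB⟩
    have h1 : y ⬝ᵥ A.mulVec x ≤ y ⬝ᵥ b := by
      refine Finset.sum_le_sum fun i _ => ?_
      exact mul_le_mul_of_nonneg_left (hxA i) (hy i)
    have h2 : z ⬝ᵥ B.mulVec x < z ⬝ᵥ c := by
      obtain ⟨j₀, hj₀⟩ : ∃ j, 0 < z j := by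
        by_contra hcon
        push_neg at hcon
        have := Finset.sum_nonpos (fun j (_ : j ∈ Finset.univ) => hcon j)
        linarith
      exact Finset.sum_lt_sum
        (fun j _ => mul_le_mul_of_nonneg_left (hxB j).le (hz j))
        ⟨j₀, Finset.mem_univ _, mul_lt_mul_of_pos_left (hxB j₀) hj₀⟩
    have h3 : y ⬝ᵥ A.mulVec x + z ⬝ᵥ B.mulVec x = 0 := by
      have h := congrArg (fun v => v ⬝ᵥ x) hzero
      simp only [add_dotProduct, zero_dotProduct] at h
      rw [Matrix.dotProduct_mulVec y A x, Matrix.dotProduct_mulVec z B x,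
        ← Matrix.mulVec_transpose A y, ← Matrix.mulVec_transpose B z]
      exact h
    rw [dotProduct_comm b y, dotProduct_comm c z] at hle
    linarith

end Main
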